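/- Let P = p be an n×1 probability matrix (a probability vector) and Q an n×m joint probability matrix. Then P ≻_c Q if and only if p majorizes the conditional distribution q^{|w} for every w = 1,...,m with q_w > 0, where q_w = Σ_x q_{xw} and q^{|w} = (q_{xw}/q_w)_x. -/

import Mathlib

open Matrix Finset

/-- Row-stochastic matrix: nonnegative entries, each row sums to 1. -/
def RowStoch {ℓ m : ℕ} (T : Matrix (Fin ℓ) (Fin m) ℝ) : Prop :=
  (∀ y w, 0 ≤ T y w) ∧ ∀ y, ∑ w, T y w = 1

/-- Doubly stochastic matrix. -/
def DStoch {n : ℕ} (D : Matrix (Fin n) (Fin n) ℝ) : Prop :=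
  (∀ i j, 0 ≤ D i j) ∧ (∀ i, ∑ j, D i j = 1) ∧ (∀ j, ∑ i, D i j = 1)

/-- Conditional majorization `P ≻_c Q` via classical-conditioned random relabelings:
`Q = ∑ j, D j * P * R j` with each `D j` doubly stochastic, each `R j` entrywise
nonnegative, and `∑ j, R j` row-stochastic. -/
def CondMaj {n ℓ m : ℕ} (P : Matrix (Fin n) (Fin ℓ) ℝ)
    (Q : Matrix (Fin n) (Fin m) ℝ) : Prop :=
  ∃ (J : ℕ) (D : Fin J → Matrix (Fin n) (Fin n) ℝ)
    (R : Fin J → Matrix (Fin ℓ) (Fin m) ℝ),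
    (∀ j, DStoch (D j)) ∧ (∀ j y w, 0 ≤ R j y w) ∧
    RowStoch (∑ j, R j) ∧ Q = ∑ j, D j * P * R j

/-- Joint probability matrix: nonnegative entries summing to one. -/
def JointProb {n ℓ : ℕ} (P : Matrix (Fin n) (Fin ℓ) ℝ) : Prop :=
  (∀ x y, 0 ≤ P x y) ∧ ∑ x, ∑ y, P x y = 1

/-- Column sum (marginal). -/
noncomputable def ColSum {n m : ℕ} (Q : Matrix (Fin n) (Fin m) ℝ) (w : Fin m) : ℝ :=
  ∑ x, Q x w
/-- Nonincreasing rearrangement of a vector. -/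
noncomputable def sortDesc {n : ℕ} (u : Fin n → ℝ) : Fin n → ℝ :=
  fun i => u (Tuple.sort (fun j => -u j) i)

/-- Sum of the `k` largest entries of `u`. -/
noncomputable def pSumDesc {n : ℕ} (u : Fin n → ℝ) (k : ℕ) : ℝ :=
  ∑ i ∈ Finset.univ.filter (fun i : Fin n => (i : ℕ) < k), sortDesc u i

/-- `Majorizes u v` means `u ≻ v`: all partial sums of the sorted `u` dominate
those of `v`, and the total sums coincide. -/
def Majorizes {n : ℕ} (u v : Fin n → ℝ) : Prop :=
  (∀ k : ℕ, pSumDesc v k ≤ pSumDesc u k) ∧ ∑ i, u i = ∑ i, v i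

section helpers
variable {n : ℕ}

lemma antitone_sortDesc (u : Fin n → ℝ) : Antitone (sortDesc u) := by
  have h := Tuple.monotone_sort (fun j => -u j)
  intro a b hab
  have := h hab
  simp only [Function.comp_apply, neg_le_neg_iff] at this
  exact this

lemma sum_sortDesc (u : Fin n → ℝ) : ∑ i, sortDesc u i = ∑ i, u i :=
  Equiv.sum_comp (Tuple.sort (fun j => -u j)) u

lemma card_prefix (k : ℕ) :
    (Finset.univ.filter (fun i : Fin n => (i : ℕ) < k)).card = min k n := by
  rcases le_total k n with h | h
  · have : (Finset.univ.filter (fun i : Fin n => (i : ℕ) < k)) =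
        Finset.map ⟨Fin.castLE h, Fin.castLE_injective h⟩ Finset.univ := by
      ext i
      simp only [mem_filter, mem_univ, true_and, mem_map, Function.Embedding.coeFn_mk]
      constructor
      · rintro hi; exact ⟨⟨(i : ℕ), hi⟩, by ext; simp⟩
      · rintro ⟨j, rfl⟩; exact j.2
    rw [this, card_map, card_univ, Fintype.card_fin, min_eq_left h]
  · have : (Finset.univ.filter (fun i : Fin n => (i : ℕ) < k)) = Finset.univ := by
      ext i; simp only [mem_filter, mem_univ, true_and, iff_true]
      exact lt_of_lt_of_le i.2 h
    rw [this, card_univ, Fintype.card_fin, min_eq_right h]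

lemma pSumDesc_of_le {u : Fin n → ℝ} {k : ℕ} (h : n ≤ k) :
    pSumDesc u k = ∑ i, u i := by
  rw [pSumDesc, ← sum_sortDesc]
  congr 1
  ext i; simp only [mem_filter, mem_univ, true_and, iff_true]
  exact lt_of_lt_of_le i.2 h

/-- For antitone `d`, the sum over any set is at most the sum over the prefix of
the same cardinality. -/
lemma sum_le_sum_prefix {d : Fin n → ℝ} (hd : Antitone d) (s : Finset (Fin n)) :
    ∑ i ∈ s, d i ≤ ∑ i ∈ Finset.univ.filter (fun i : Fin n => (i : ℕ) < s.card), d i := by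
  set c := s.card with hc
  set t := Finset.univ.filter (fun i : Fin n => (i : ℕ) < c) with ht
  have hcard_t : t.card = min c n := card_prefix c
  have hcn : c ≤ n := by rw [hc]; simpa using Finset.card_le_univ s
  have hct : t.card = c := by rw [hcard_t, min_eq_left hcn]
  have key : ∑ i ∈ s \ t, d i ≤ ∑ i ∈ t \ s, d i := by
    have hcards : (s \ t).card = (t \ s).card :=
      Finset.card_sdiff_comm (by omega)
    rcases Finset.eq_empty_or_nonempty (s \ t) with he | ⟨i0, hi0⟩
    · have hsub : s ⊆ t := by
        intro i hi
        by_contra hit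
        exact absurd (Finset.mem_sdiff.2 ⟨hi, hit⟩) (by simp [he])
      have : s = t := Finset.eq_of_subset_of_card_le hsub (le_of_eq (hct.trans hc.symm))
      simp [this]
    · have hcltn : c < n := by
        have hi0' := Finset.mem_sdiff.1 hi0
        have : ¬ ((i0 : ℕ) < c) := by
          intro hh; exact hi0'.2 (by simp [ht, hh])
        have := i0.2
        omega
      set θ := d ⟨c, hcltn⟩ with hθ
      have h1 : ∀ i ∈ s \ t, d i ≤ θ := by
        intro i hi
        have hit := (Finset.mem_sdiff.1 hi).2
        have : ¬ ((i : ℕ) < c) := fun hh => hit (by simp [ht, hh])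
        exact hd (by simpa [Fin.le_def] using not_lt.1 this)
      have h2 : ∀ i ∈ t \ s, θ ≤ d i := by
        intro i hi
        have hit := (Finset.mem_sdiff.1 hi).1
        have : (i : ℕ) < c := by simpa [ht] using hit
        exact hd (by simpa [Fin.le_def] using this.le)
      calc ∑ i ∈ s \ t, d i ≤ (s \ t).card • θ := Finset.sum_le_card_nsmul _ _ _ h1
        _ = (t \ s).card • θ := by rw [hcards]
        _ ≤ ∑ i ∈ t \ s, d i := Finset.card_nsmul_le_sum _ _ _ h2
  calc ∑ i ∈ s, d i = ∑ i ∈ s ∩ t, d i + ∑ i ∈ s \ t, d i :=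
        (Finset.sum_inter_add_sum_sdiff s t d).symm
    _ ≤ ∑ i ∈ s ∩ t, d i + ∑ i ∈ t \ s, d i := by linarith
    _ = ∑ i ∈ t ∩ s, d i + ∑ i ∈ t \ s, d i := by rw [Finset.inter_comm]
    _ = ∑ i ∈ t, d i := Finset.sum_inter_add_sum_sdiff t s d

end helpers

section helpers2
variable {n : ℕ}

/-- Sum over any set is at most the sum of the `card`-largest entries. -/
lemma sum_le_pSumDesc (u : Fin n → ℝ) (s : Finset (Fin n)) :
    ∑ x ∈ s, u x ≤ pSumDesc u s.card := by
  set σ := Tuple.sort (fun j => -u j) with hσ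
  have himg : ∑ x ∈ s, u x = ∑ i ∈ s.image σ.symm, sortDesc u i := by
    rw [Finset.sum_image (fun a _ b _ h => σ.symm.injective h)]
    apply Finset.sum_congr rfl
    intro x hx
    simp [sortDesc, ← hσ]
  have hcard : (s.image σ.symm).card = s.card :=
    Finset.card_image_of_injective _ σ.symm.injective
  rw [himg, pSumDesc, ← hcard]
  exact sum_le_sum_prefix (antitone_sortDesc u) _

/-- `pSumDesc u k` is realized as the sum of `u` over a set of size `min k n`. -/
lemma pSumDesc_eq_sum (u : Fin n → ℝ) (k : ℕ) :
    ∃ s : Finset (Fin n), s.card = min k n ∧ pSumDesc u k = ∑ x ∈ s, u x := by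
  set σ := Tuple.sort (fun j => -u j) with hσ
  refine ⟨(Finset.univ.filter (fun i : Fin n => (i : ℕ) < k)).image σ, ?_, ?_⟩
  · rw [Finset.card_image_of_injective _ σ.injective, card_prefix]
  · rw [Finset.sum_image (fun a _ b _ h => σ.injective h)]
    rfl

/-- If `0 ≤ c ≤ 1` with `∑ c ≤ k` and `p ≥ 0`, then `∑ c p` is at most the sum
of the `k` largest entries of `p`. -/
lemma dot_le_pSumDesc {p c : Fin n → ℝ} (hp : ∀ y, 0 ≤ p y) (hc0 : ∀ y, 0 ≤ c y)
    (hc1 : ∀ y, c y ≤ 1) {k : ℕ} (hk : ∑ y, c y ≤ (k : ℝ)) :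
    ∑ y, c y * p y ≤ pSumDesc p k := by
  set σ := Tuple.sort (fun j => -p j) with hσ
  set d := sortDesc p with hd
  have hre : ∑ y, c y * p y = ∑ i, c (σ i) * d i :=
    (Equiv.sum_comp σ (fun y => c y * p y)).symm
  have hd0 : ∀ i, 0 ≤ d i := fun i => hp _
  rcases le_or_gt n k with hnk | hkn
  · rw [hre, pSumDesc_of_le hnk, ← sum_sortDesc p]
    apply Finset.sum_le_sum
    intro i _
    calc c (σ i) * d i ≤ 1 * d i := by
          apply mul_le_mul_of_nonneg_right (hc1 _) (hd0 i)
      _ = d i := one_mul _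
  · -- k < n
    set θ := d ⟨k, hkn⟩ with hθ
    have hθ0 : 0 ≤ θ := hd0 _
    set t := Finset.univ.filter (fun i : Fin n => (i : ℕ) < k) with ht
    have hct : t.card = k := by rw [ht, card_prefix, min_eq_left hkn.le]
    have split : ∑ i, c (σ i) * d i = ∑ i ∈ t, c (σ i) * d i + ∑ i ∈ tᶜ, c (σ i) * d i :=
      (Finset.sum_add_sum_compl t _).symm
    have h1 : ∑ i ∈ t, (c (σ i) * d i - d i) ≤ ∑ i ∈ t, (c (σ i) - 1) * θ := by
      apply Finset.sum_le_sum
      intro i hi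
      have hik : (i : ℕ) < k := by simpa [ht] using hi
      have hdi : θ ≤ d i := antitone_sortDesc p (by simp [Fin.le_def]; omega)
      have : c (σ i) - 1 ≤ 0 := by linarith [hc1 (σ i)]
      nlinarith
    have h2 : ∑ i ∈ tᶜ, c (σ i) * d i ≤ ∑ i ∈ tᶜ, c (σ i) * θ := by
      apply Finset.sum_le_sum
      intro i hi
      have hik : ¬ ((i : ℕ) < k) := by simpa [ht] using hi
      have hdi : d i ≤ θ := antitone_sortDesc p (by simp [Fin.le_def]; omega)
      nlinarith [hc0 (σ i)]
    have h3 : ∑ i ∈ t, (c (σ i) - 1) * θ + ∑ i ∈ tᶜ, c (σ i) * θ ≤ 0 := by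
      have e1 : ∑ i ∈ t, (c (σ i) - 1) * θ = (∑ i ∈ t, c (σ i)) * θ - t.card * θ := by
        simp [sub_mul, Finset.sum_sub_distrib, ← Finset.sum_mul, Finset.sum_const,
          nsmul_eq_mul]
      have e2 : ∑ i ∈ tᶜ, c (σ i) * θ = (∑ i ∈ tᶜ, c (σ i)) * θ := by rw [Finset.sum_mul]
      have e3 : ∑ i ∈ t, c (σ i) + ∑ i ∈ tᶜ, c (σ i) = ∑ y, c y := by
        rw [Finset.sum_add_sum_compl]
        exact Equiv.sum_comp σ c
      rw [e1, e2, hct]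
      nlinarith [hk, e3]
    have hps : pSumDesc p k = ∑ i ∈ t, d i := rfl
    rw [hre, hps, split]
    have hsub : ∑ i ∈ t, (c (σ i) * d i - d i)
        = ∑ i ∈ t, c (σ i) * d i - ∑ i ∈ t, d i := Finset.sum_sub_distrib _ _
    linarith [h1, h2, h3, hsub]
end helpers2

section abel
variable {n : ℕ}

lemma prefix_sum_eq (g : Fin n → ℝ) {k : ℕ} (hk : k ≤ n) :
    ∑ i ∈ Finset.range k, (if h : i < n then g ⟨i, h⟩ else 0)
      = ∑ i ∈ Finset.univ.filter (fun i : Fin n => (i : ℕ) < k), g i := by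
  refine Finset.sum_bij' (fun i hi => (⟨i, lt_of_lt_of_le (Finset.mem_range.1 hi) hk⟩ : Fin n))
    (fun i _ => (i : ℕ)) ?_ ?_ ?_ ?_ ?_
  · intro a ha; simp [Finset.mem_range.1 ha]
  · intro a ha; simp only [mem_filter] at ha; simpa using ha.2
  · intro a ha; rfl
  · intro a ha; rfl
  · intro a ha
    have : a < n := lt_of_lt_of_le (Finset.mem_range.1 ha) hk
    simp [this]

lemma abel_nonpos {d g : Fin n → ℝ} (hd : Antitone d)
    (h : ∀ k : ℕ, ∑ i ∈ Finset.univ.filter (fun i : Fin n => (i : ℕ) < k), g i ≤ 0)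
    (h0 : ∑ i, g i = 0) :
    ∑ i, d i * g i ≤ 0 := by
  rcases Nat.eq_zero_or_pos n with rfl | hn
  · simp
  set d' : ℕ → ℝ := fun i => if h : i < n then d ⟨i, h⟩ else 0 with hd'
  set g' : ℕ → ℝ := fun i => if h : i < n then g ⟨i, h⟩ else 0 with hg'
  have hsum : ∑ i, d i * g i = ∑ i ∈ Finset.range n, d' i • g' i := by
    rw [← Fin.sum_univ_eq_sum_range (fun i => d' i • g' i) n]
    apply Finset.sum_congr rfl
    intro i _
    simp [hd', hg', i.2, smul_eq_mul]
  have hGtot : ∑ i ∈ Finset.range n, g' i = 0 := by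
    rw [prefix_sum_eq g (le_refl n)]
    rw [← h0]
    congr 1
    ext i; simp [i.2]
  have hGle : ∀ k, k ≤ n → ∑ i ∈ Finset.range k, g' i ≤ 0 := by
    intro k hk
    rw [prefix_sum_eq g hk]
    exact h k
  rw [hsum, Finset.sum_range_by_parts d' g' n, hGtot, smul_zero, zero_sub, neg_nonpos]
  apply Finset.sum_nonneg
  intro i hi
  have hi1 : i + 1 ≤ n := by have := Finset.mem_range.1 hi; omega
  have hin : i < n := by omega
  have hi1n : i + 1 < n ∨ i + 1 = n := by omega
  have hmono : d' (i + 1) - d' i ≤ 0 := by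
    rcases lt_or_eq_of_le hi1 with h1 | h1
    · have : d ⟨i + 1, h1⟩ ≤ d ⟨i, hin⟩ := hd (by simp [Fin.le_def])
      simp only [hd', dif_pos h1, dif_pos hin]
      linarith
    · have := Finset.mem_range.1 hi; omega
  have := hGle (i + 1) hi1
  simp only [smul_eq_mul]
  nlinarith
end abel

section key
variable {n : ℕ}

/-- If `u ≻ v` then every linear functional of `v` is dominated by the same
functional on a suitable permutation of `u`. -/
lemma maj_dot_le {u v : Fin n → ℝ} (h : Majorizes u v) (c : Fin n → ℝ) :
    ∃ τ : Equiv.Perm (Fin n), ∑ i, c i * v i ≤ ∑ i, c i * u (τ i) := by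
  classical
  set σc := Tuple.sort (fun j => -c j) with hσc
  set σu := Tuple.sort (fun j => -u j) with hσu
  set d := sortDesc c with hdd
  refine ⟨(σc.symm.trans σu), ?_⟩
  have hL : ∑ i, c i * v i = ∑ i, d i * v (σc i) :=
    (Equiv.sum_comp σc (fun i => c i * v i)).symm
  have hR : ∑ i, c i * u ((σc.symm.trans σu) i) = ∑ i, d i * sortDesc u i := by
    rw [← Equiv.sum_comp σc (fun i => c i * u ((σc.symm.trans σu) i))]
    apply Finset.sum_congr rfl
    intro i _
    simp [sortDesc, ← hσu, ← hσc, d]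
  rw [hL, hR]
  have key : ∑ i, d i * (v (σc i) - sortDesc u i) ≤ 0 := by
    apply abel_nonpos (antitone_sortDesc c)
    · intro k
      rw [Finset.sum_sub_distrib]
      have h1 : ∑ i ∈ Finset.univ.filter (fun i : Fin n => (i : ℕ) < k), v (σc i)
          ≤ pSumDesc u k := by
        set t := Finset.univ.filter (fun i : Fin n => (i : ℕ) < k) with ht
        have himg : ∑ i ∈ t, v (σc i) = ∑ x ∈ t.image σc, v x := by
          rw [Finset.sum_image (fun a _ b _ hab => σc.injective hab)]
        have hcard : (t.image σc).card = min k n := by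
          rw [Finset.card_image_of_injective _ σc.injective, ht, card_prefix]
        calc ∑ i ∈ t, v (σc i) = ∑ x ∈ t.image σc, v x := himg
          _ ≤ pSumDesc v (min k n) := by rw [← hcard]; exact sum_le_pSumDesc v _
          _ ≤ pSumDesc u (min k n) := h.1 _
          _ = pSumDesc u k := by
              rcases le_total k n with hkn | hnk
              · rw [min_eq_left hkn]
              · rw [min_eq_right hnk, pSumDesc_of_le (le_refl n), pSumDesc_of_le hnk]
      have h2 : ∑ i ∈ Finset.univ.filter (fun i : Fin n => (i : ℕ) < k), sortDesc u i
          = pSumDesc u k := rfl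
      linarith
    · rw [Finset.sum_sub_distrib, sum_sortDesc, Equiv.sum_comp σc v, ← h.2, sub_self]
  have expand : ∑ i, d i * (v (σc i) - sortDesc u i)
      = ∑ i, d i * v (σc i) - ∑ i, d i * sortDesc u i := by
    rw [← Finset.sum_sub_distrib]
    apply Finset.sum_congr rfl
    intros; ring
  linarith [key, expand.symm ▸ key]

/-- Hardy–Littlewood–Pólya: majorization yields a doubly stochastic matrix. -/
lemma exists_dstoch {u v : Fin n → ℝ} (h : Majorizes u v) :
    ∃ D : Matrix (Fin n) (Fin n) ℝ, DStoch D ∧ ∀ x, ∑ y, D x y * u y = v x := by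
  classical
  set S : Set (Fin n → ℝ) := Set.range (fun τ : Equiv.Perm (Fin n) => fun i => u (τ i)) with hS
  have hSfin : S.Finite := Set.finite_range _
  have hmem : v ∈ convexHull ℝ S := by
    by_contra hv
    obtain ⟨f, b, hfa, hfv⟩ := geometric_hahn_banach_closed_point
      (convex_convexHull ℝ S) (hSfin.isCompact_convexHull (𝕜 := ℝ)).isClosed hv
    set c : Fin n → ℝ := fun j => f (Pi.single j 1) with hc
    have hf : ∀ x : Fin n → ℝ, f x = ∑ j, c j * x j := by
      intro x
      have hx : x = ∑ j, x j • (Pi.single j 1 : Fin n → ℝ) := by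
        ext i
        simp [Pi.single_apply, Finset.sum_ite_eq', mul_comm]
      conv_lhs => rw [hx]
      rw [map_sum]
      apply Finset.sum_congr rfl
      intro j _
      rw [f.map_smul, smul_eq_mul, mul_comm]
  -- ∑ c j * x j vs order
    obtain ⟨τ, hτ⟩ := maj_dot_le h c
    have h1 : f (fun i => u (τ i)) < b := hfa _ (subset_convexHull ℝ S ⟨τ, rfl⟩)
    have h2 : b < f v := hfv
    rw [hf] at h1 h2
    have : ∑ j, c j * v j ≤ ∑ j, c j * u (τ j) := hτ
    linarith
  rw [_root_.convexHull_eq] at hmem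
  obtain ⟨ι, t, wt, z, hw0, hw1, hzS, hcm⟩ := hmem
  have hz : ∀ i ∈ t, ∃ τ : Equiv.Perm (Fin n), z i = fun x => u (τ x) := by
    intro i hi
    obtain ⟨τ, hτ⟩ := hzS i hi
    exact ⟨τ, hτ.symm⟩
  choose! τ hτ using hz
  have hvsum : v = ∑ i ∈ t, wt i • z i := by
    rw [← hcm, Finset.centerMass_eq_of_sum_1 _ _ hw1]
  refine ⟨fun x y => ∑ i ∈ t, wt i * (if y = τ i x then 1 else 0), ⟨?_, ?_, ?_⟩, ?_⟩
  · intro x y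
    apply Finset.sum_nonneg
    intro i hi
    have := hw0 i hi
    positivity
  · intro x
    rw [Finset.sum_comm]
    have hrow : ∀ i ∈ t, ∑ y, wt i * (if y = τ i x then (1:ℝ) else 0) = wt i := by
      intro i hi
      rw [← Finset.mul_sum]
      simp [Finset.sum_ite_eq']
    rw [Finset.sum_congr rfl hrow, hw1]
  · intro y
    rw [Finset.sum_comm]
    have hcol : ∀ i ∈ t, ∑ x, wt i * (if y = τ i x then (1:ℝ) else 0) = wt i := by
      intro i hi
      rw [← Finset.mul_sum]
      rw [Equiv.sum_comp (τ i) (fun x => if y = x then (1:ℝ) else 0)]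
      simp [Finset.sum_ite_eq]
    rw [Finset.sum_congr rfl hcol, hw1]
  · intro x
    have h1 : ∀ i ∈ t, ∑ y, wt i * (if y = τ i x then (1:ℝ) else 0) * u y
        = wt i * u (τ i x) := by
      intro i hi
      simp_rw [mul_assoc, ← Finset.mul_sum]
      congr 1
      simp [ite_mul, Finset.sum_ite_eq']
    have h2 : v x = ∑ i ∈ t, wt i * u (τ i x) := by
      rw [hvsum, Finset.sum_apply]
      apply Finset.sum_congr rfl
      intro i hi
      rw [hτ i hi]
      simp
    calc ∑ y, (∑ i ∈ t, wt i * (if y = τ i x then (1:ℝ) else 0)) * u y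
        = ∑ y, ∑ i ∈ t, wt i * (if y = τ i x then (1:ℝ) else 0) * u y := by
          apply Finset.sum_congr rfl; intros; rw [Finset.sum_mul]
      _ = ∑ i ∈ t, ∑ y, wt i * (if y = τ i x then (1:ℝ) else 0) * u y :=
          Finset.sum_comm
      _ = ∑ i ∈ t, wt i * u (τ i x) := Finset.sum_congr rfl h1
      _ = v x := h2.symm
end key

lemma one_dstoch {n : ℕ} : DStoch (1 : Matrix (Fin n) (Fin n) ℝ) := by
  refine ⟨fun i j => ?_, fun i => ?_, fun j => ?_⟩
  · rw [Matrix.one_apply]; split <;> norm_num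
  · simp [Matrix.one_apply, Finset.sum_ite_eq]
  · simp [Matrix.one_apply, Finset.sum_ite_eq']

theorem stmt9 {n m : ℕ} (P : Matrix (Fin n) (Fin 1) ℝ) (Q : Matrix (Fin n) (Fin m) ℝ)
    (hP : JointProb P) (hQ : JointProb Q) :
    CondMaj P Q ↔
      ∀ w, 0 < ColSum Q w →
        Majorizes (fun x => P x 0) (fun x => Q x w / ColSum Q w) := by
  classical
  rcases Nat.eq_zero_or_pos n with rfl | hn
  · exact absurd hP.2 (by simp)
  have hp0 : ∀ x, 0 ≤ P x 0 := fun x => hP.1 x 0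
  have hp1 : ∑ x, P x 0 = 1 := by
    have h2 := hP.2
    calc ∑ x, P x 0 = ∑ x, ∑ y, P x y := by
          apply Finset.sum_congr rfl; intros; rw [Fin.sum_univ_one]
      _ = 1 := h2
  constructor
  · -- forward
    rintro ⟨J, D, R, hD, hR0, hRS, hQeq⟩ w hw
    set qw := ColSum Q w with hqw
    set r : Fin J → ℝ := fun j => R j 0 w with hr
    have hr0 : ∀ j, 0 ≤ r j := fun j => hR0 j 0 w
    have hentry : ∀ x, Q x w = ∑ j, (∑ x', D j x x' * P x' 0) * r j := by
      intro x
      rw [hQeq, Matrix.sum_apply]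
      apply Finset.sum_congr rfl
      intro j _
      rw [Matrix.mul_apply, Fin.sum_univ_one, Matrix.mul_apply]
    have hsum_r : qw = ∑ j, r j := by
      rw [hqw, ColSum]
      calc ∑ x, Q x w = ∑ x, ∑ j, (∑ x', D j x x' * P x' 0) * r j := by
            apply Finset.sum_congr rfl; intros; rw [hentry]
        _ = ∑ j, ∑ x, (∑ x', D j x x' * P x' 0) * r j := Finset.sum_comm
        _ = ∑ j, r j := by
            apply Finset.sum_congr rfl
            intro j _
            rw [← Finset.sum_mul]
            have hone : ∑ x, ∑ x', D j x x' * P x' 0 = 1 := by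
              rw [Finset.sum_comm]
              calc ∑ x', ∑ x, D j x x' * P x' 0
                  = ∑ x', (∑ x, D j x x') * P x' 0 := by
                    apply Finset.sum_congr rfl; intros; rw [Finset.sum_mul]
                _ = ∑ x', P x' 0 := by
                    apply Finset.sum_congr rfl
                    intro x' _
                    rw [(hD j).2.2 x', one_mul]
                _ = 1 := hp1
            rw [hone, one_mul]
    constructor
    · -- partial sums
      intro k
      obtain ⟨s, hcard, heq⟩ := pSumDesc_eq_sum (fun x => Q x w / qw) k
      rw [heq]
      have hinner : ∀ j : Fin J, ∑ x ∈ s, ∑ x', D j x x' * P x' 0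
          ≤ pSumDesc (fun x => P x 0) k := by
        intro j
        have hswap : ∑ x ∈ s, ∑ x', D j x x' * P x' 0
            = ∑ x', (∑ x ∈ s, D j x x') * P x' 0 := by
          rw [Finset.sum_comm]
          apply Finset.sum_congr rfl; intros; rw [Finset.sum_mul]
        rw [hswap]
        apply dot_le_pSumDesc hp0
        · intro y; exact Finset.sum_nonneg fun x _ => (hD j).1 x y
        · intro y
          calc ∑ x ∈ s, D j x y ≤ ∑ x, D j x y :=
                Finset.sum_le_sum_of_subset_of_nonneg (Finset.subset_univ s)
                  (fun x _ _ => (hD j).1 x y)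
            _ = 1 := (hD j).2.2 y
        · calc ∑ y, ∑ x ∈ s, D j x y = ∑ x ∈ s, ∑ y, D j x y := Finset.sum_comm
            _ = ∑ x ∈ s, (1:ℝ) := by
                apply Finset.sum_congr rfl; intro x _; exact (hD j).2.1 x
            _ = (s.card : ℝ) := by rw [Finset.sum_const]; simp
            _ ≤ (k : ℝ) := by
                rw [hcard]; exact_mod_cast min_le_left k n
      have hbound : ∑ x ∈ s, Q x w ≤ pSumDesc (fun x => P x 0) k * qw := by
        calc ∑ x ∈ s, Q x w
            = ∑ x ∈ s, ∑ j, (∑ x', D j x x' * P x' 0) * r j := by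
              apply Finset.sum_congr rfl; intros; rw [hentry]
          _ = ∑ j, (∑ x ∈ s, ∑ x', D j x x' * P x' 0) * r j := by
              rw [Finset.sum_comm]
              apply Finset.sum_congr rfl; intros; rw [Finset.sum_mul]
          _ ≤ ∑ j, pSumDesc (fun x => P x 0) k * r j := by
              apply Finset.sum_le_sum
              intro j _
              exact mul_le_mul_of_nonneg_right (hinner j) (hr0 j)
          _ = pSumDesc (fun x => P x 0) k * qw := by
              rw [← Finset.mul_sum, hsum_r]
      rw [← Finset.sum_div, div_le_iff₀ hw]
      exact hbound
    · -- total sums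
      have htot : ∑ x, Q x w / qw = 1 := by
        rw [← Finset.sum_div]
        rw [show ∑ x, Q x w = qw from rfl]
        exact div_self hw.ne'
      rw [hp1, htot]
  · -- reverse
    intro h
    have hDex : ∀ w : Fin m, ∃ D : Matrix (Fin n) (Fin n) ℝ, DStoch D ∧
        (0 < ColSum Q w → ∀ x, ∑ y, D x y * P y 0 = Q x w / ColSum Q w) := by
      intro w
      by_cases hw : 0 < ColSum Q w
      · obtain ⟨D, hDs, hDu⟩ := exists_dstoch (h w hw)
        exact ⟨D, hDs, fun _ => hDu⟩
      · exact ⟨1, one_dstoch, fun hw' => absurd hw' hw⟩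
    choose Dm hDm hDv using hDex
    have hcs0 : ∀ w, 0 ≤ ColSum Q w := fun w =>
      Finset.sum_nonneg fun x _ => hQ.1 x w
    refine ⟨m, Dm, fun w => Matrix.of fun _ w' => if w' = w then ColSum Q w else 0, hDm, ?_, ?_, ?_⟩
    · intro j y w'
      show (0:ℝ) ≤ if w' = j then ColSum Q j else 0
      split
      · exact hcs0 j
      · exact le_refl 0
    · constructor
      · intro y w'
        rw [Matrix.sum_apply]
        apply Finset.sum_nonneg
        intro j _
        show (0:ℝ) ≤ if w' = j then ColSum Q j else 0
        split
        · exact hcs0 j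
        · exact le_refl 0
      · intro y
        have hentry : ∀ w' : Fin m,
            (∑ j, Matrix.of fun (_ : Fin 1) w'' => if w'' = j then ColSum Q j else 0 : Matrix (Fin 1) (Fin m) ℝ) y w' = ColSum Q w' := by
          intro w'
          rw [Matrix.sum_apply]
          simp [Finset.sum_ite_eq]
        rw [Finset.sum_congr rfl (fun w' _ => hentry w')]
        calc ∑ w', ColSum Q w' = ∑ w', ∑ x, Q x w' := rfl
          _ = ∑ x, ∑ w', Q x w' := Finset.sum_comm
          _ = 1 := hQ.2
    · ext x w'
      rw [Matrix.sum_apply]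
      have hterm : ∀ j : Fin m, (Dm j * P * Matrix.of fun (_ : Fin 1) w'' => if w'' = j then ColSum Q j else 0 : Matrix (Fin n) (Fin m) ℝ) x w'
          = if w' = j then (∑ y, Dm j x y * P y 0) * ColSum Q j else 0 := by
        intro j
        rw [Matrix.mul_apply, Fin.sum_univ_one, Matrix.mul_apply, Matrix.of_apply]
        split <;> simp
      rw [Finset.sum_congr rfl (fun j _ => hterm j), Finset.sum_ite_eq]
      simp only [Finset.mem_univ, if_true]
      by_cases hw : 0 < ColSum Q w'
      · rw [hDv w' hw x, div_mul_cancel₀ _ hw.ne']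
      · have hz : ColSum Q w' = 0 := le_antisymm (not_lt.1 hw) (hcs0 w')
        rw [hz, mul_zero]
        have : ∑ x, Q x w' = 0 := hz
        exact (Finset.sum_eq_zero_iff_of_nonneg (fun x _ => hQ.1 x w')).1 this x
          (Finset.mem_univ x)
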